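/- arXiv:1501.04008 — 8 statements merged into one kernel-verified Lean document; each statement's English description precedes it below -/
import Mathlib

section
/- Let F be a non-empty collection of open discs in the complex plane that is nested (totally ordered by inclusion), such that the supremum of the radii of the discs in F is finite. Then the union of F is an open disc whose radius equals the supremum of the radii of the discs in F. -/
lemma diam_ball_complex (z : ℂ) {r : ℝ} (hr : 0 ≤ r) :
    Metric.diam (Metric.ball z r) = 2 * r := by
  refine le_antisymm (Metric.diam_ball hr) ?_
  rcases eq_or_lt_of_le hr with h | h
  · simp [← h]
  refine le_of_forall_pos_le_add (fun ε hε => ?_)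
  set δ : ℝ := min (ε / 4) (r / 2) with hδ
  have hδ0 : 0 < δ := lt_min (by linarith) (by linarith)
  have hδr : δ < r := lt_of_le_of_lt (min_le_right _ _) (by linarith)
  have h1 : z + ((r - δ : ℝ) : ℂ) ∈ Metric.ball z r := by
    rw [Metric.mem_ball, Complex.dist_eq]
    have e : z + ((r - δ : ℝ) : ℂ) - z = ((r - δ : ℝ) : ℂ) := by ring
    rw [e, Complex.norm_real, Real.norm_eq_abs, abs_of_nonneg (by linarith : (0:ℝ) ≤ r - δ)]
    linarith
  have h2 : z - ((r - δ : ℝ) : ℂ) ∈ Metric.ball z r := by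
    rw [Metric.mem_ball, Complex.dist_eq]
    have e : z - ((r - δ : ℝ) : ℂ) - z = -((r - δ : ℝ) : ℂ) := by ring
    rw [e, norm_neg, Complex.norm_real, Real.norm_eq_abs, abs_of_nonneg (by linarith : (0:ℝ) ≤ r - δ)]
    linarith
  have hd : dist (z + ((r - δ : ℝ) : ℂ)) (z - ((r - δ : ℝ) : ℂ)) = 2 * (r - δ) := by
    rw [Complex.dist_eq]
    have : (z + ((r - δ : ℝ) : ℂ)) - (z - ((r - δ : ℝ) : ℂ)) = ((2 * (r - δ) : ℝ) : ℂ) := by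
      push_cast; ring
    rw [this, Complex.norm_real, Real.norm_eq_abs, abs_of_nonneg (by linarith)]
  have := Metric.dist_le_diam_of_mem Metric.isBounded_ball h1 h2
  rw [hd] at this
  have hδε : δ ≤ ε / 4 := min_le_left _ _
  linarith

lemma ball_subset_ball_imp {z z' : ℂ} {r r' : ℝ} (hr : 0 < r)
    (h : Metric.ball z r ⊆ Metric.ball z' r') : dist z z' + r ≤ r' := by
  refine le_of_forall_pos_le_add (fun ε hε => ?_)
  set δ : ℝ := min (ε / 2) (r / 2) with hδdef
  have hδ0 : 0 < δ := lt_min (by linarith) (by linarith)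
  have hδr : δ < r := lt_of_le_of_lt (min_le_right _ _) (by linarith)
  have hδε : δ ≤ ε := le_trans (min_le_left _ _) (by linarith)
  set u : ℂ := if hzz : z = z' then 1 else (z - z') / ((‖z - z'‖ : ℝ) : ℂ) with hu
  have hu1 : ‖u‖ = 1 := by
    rw [hu]
    split_ifs with hzz
    · simp
    · have : z - z' ≠ 0 := sub_ne_zero.mpr hzz
      rw [norm_div, Complex.norm_real, Real.norm_eq_abs, abs_of_nonneg (norm_nonneg _)]
      exact div_self (norm_ne_zero_iff.mpr this)
  have hzu : z - z' = ((dist z z' : ℝ) : ℂ) * u := by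
    rw [hu]
    split_ifs with hzz
    · subst hzz; simp
    · have hne : z - z' ≠ 0 := sub_ne_zero.mpr hzz
      have habs : ((‖z - z'‖ : ℝ) : ℂ) ≠ 0 := by
        simpa using norm_ne_zero_iff.mpr hne
      rw [Complex.dist_eq]
      field_simp
  have hw : z + ((r - δ : ℝ) : ℂ) * u ∈ Metric.ball z r := by
    rw [Metric.mem_ball, Complex.dist_eq]
    have : z + ((r - δ : ℝ) : ℂ) * u - z = ((r - δ : ℝ) : ℂ) * u := by ring
    rw [this, norm_mul, hu1, Complex.norm_real, Real.norm_eq_abs, abs_of_nonneg (by linarith)]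
    linarith
  have := h hw
  rw [Metric.mem_ball, Complex.dist_eq] at this
  have heq : z + ((r - δ : ℝ) : ℂ) * u - z' = ((dist z z' + (r - δ) : ℝ) : ℂ) * u := by
    have : z + ((r - δ : ℝ) : ℂ) * u - z' = (z - z') + ((r - δ : ℝ) : ℂ) * u := by ring
    rw [this, hzu]; push_cast; ring
  rw [heq, norm_mul, hu1, Complex.norm_real, Real.norm_eq_abs, mul_one,
    abs_of_nonneg (by have := dist_nonneg (x := z) (y := z'); linarith)] at this
  linarith


/-- An open disc in the complex plane: a set of the form `B(z,r)` with `r > 0`. -/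
def IsOpenDisc (D : Set ℂ) : Prop := ∃ z : ℂ, ∃ r : ℝ, 0 < r ∧ D = Metric.ball z r

/-- The radius of a disc, computed as half its diameter (so `r = 0` for `∅` or singletons). -/
noncomputable def discRadius (D : Set ℂ) : ℝ := Metric.diam D / 2

theorem union_of_nested_open_discs (F : Set (Set ℂ)) (hne : F.Nonempty)
    (hchain : IsChain (· ⊆ ·) F) (hdisc : ∀ D ∈ F, IsOpenDisc D)
    (hbdd : BddAbove (discRadius '' F)) :
    IsOpenDisc (⋃₀ F) ∧ discRadius (⋃₀ F) = sSup (discRadius '' F) := by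
  classical
  have hsub : ∀ D : F, ∃ z : ℂ, ∃ r : ℝ, 0 < r ∧ (D : Set ℂ) = Metric.ball z r :=
    fun D => hdisc D D.2
  choose c rad hrpos hballD using hsub
  have hdr : ∀ D : F, discRadius (D : Set ℂ) = rad D := by
    intro D
    rw [hballD D, discRadius, diam_ball_complex _ (hrpos D).le]
    ring
  set s := sSup (discRadius '' F) with hs
  have hle : ∀ D : F, rad D ≤ s := by
    intro D
    rw [← hdr]
    exact le_csSup hbdd ⟨D, D.2, rfl⟩
  have hFne : Nonempty F := hne.to_subtype
  obtain ⟨D0⟩ := hFne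
  have hspos : 0 < s := lt_of_lt_of_le (hrpos D0) (hle D0)
  have key : ∀ D E : F, (D : Set ℂ) ⊆ E → dist (c D) (c E) + rad D ≤ rad E := by
    intro D E h
    apply ball_subset_ball_imp (hrpos D)
    rw [← hballD D, ← hballD E]
    exact h
  have tot : ∀ D E : F, (D : Set ℂ) ⊆ E ∨ (E : Set ℂ) ⊆ D :=
    fun D E => hchain.total D.2 E.2
  have hseq : ∀ n : ℕ, ∃ D : F, s - 1 / (n + 1) < rad D := by
    intro n
    have h1 : s - 1 / (n + 1 : ℝ) < s := sub_lt_self _ (by positivity)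
    obtain ⟨x, ⟨D, hD, rfl⟩, hx⟩ := exists_lt_of_lt_csSup (hne.image _) h1
    exact ⟨⟨D, hD⟩, by rwa [hdr ⟨D, hD⟩] at hx⟩
  choose g hg using hseq
  have hdistg : ∀ n m : ℕ, dist (c (g n)) (c (g m)) ≤ max (1 / (n + 1 : ℝ)) (1 / (m + 1 : ℝ)) := by
    intro n m
    rcases tot (g n) (g m) with h | h
    · have h1 := key _ _ h
      have h2 := hle (g m)
      have h3 := hg n
      refine le_trans ?_ (le_max_left _ _)
      linarith
    · have h1 := key _ _ h
      have h2 := hle (g n)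
      have h3 := hg m
      rw [dist_comm]
      refine le_trans ?_ (le_max_right _ _)
      linarith
  have hmono : ∀ {N n : ℕ}, N ≤ n → (1 : ℝ) / (n + 1) ≤ 1 / (N + 1) := by
    intro N n hn
    apply one_div_le_one_div_of_le (by positivity)
    linarith [(Nat.cast_le.mpr hn : (N : ℝ) ≤ n)]
  have hcau : CauchySeq (fun n => c (g n)) := by
    rw [Metric.cauchySeq_iff']
    intro ε hε
    obtain ⟨N, hN⟩ := exists_nat_one_div_lt hε
    refine ⟨N, fun n hn => ?_⟩
    calc dist (c (g n)) (c (g N)) ≤ max (1 / (n + 1 : ℝ)) (1 / (N + 1 : ℝ)) := hdistg n N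
      _ ≤ 1 / (N + 1) := max_le (hmono hn) le_rfl
      _ < ε := hN
  obtain ⟨z, hz⟩ := cauchySeq_tendsto_of_complete hcau
  have hzd : ∀ ε > (0 : ℝ), ∃ N : ℕ, ∀ n ≥ N, dist (c (g n)) z < ε := by
    intro ε hε
    exact Metric.tendsto_atTop.mp hz ε hε
  have hU : ⋃₀ F = Metric.ball z s := by
    ext w
    constructor
    · rintro ⟨D', hD', hw⟩
      set D : F := ⟨D', hD'⟩ with hDdef
      have hw' : w ∈ Metric.ball (c D) (rad D) := by rw [← hballD D]; exact hw
      rw [Metric.mem_ball] at hw'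
      set ε := rad D - dist w (c D) with hεdef
      have hε : 0 < ε := by simp [hεdef]; linarith
      obtain ⟨N1, hN1⟩ := exists_nat_one_div_lt (half_pos hε)
      obtain ⟨N2, hN2⟩ := hzd (ε / 2) (half_pos hε)
      set n := max N1 N2 with hndef
      have hn1 : (1 : ℝ) / (n + 1) < ε / 2 := lt_of_le_of_lt (hmono (le_max_left _ _)) hN1
      have hn2 : dist (c (g n)) z < ε / 2 := hN2 n (le_max_right _ _)
      rw [Metric.mem_ball]
      have htri : dist w z ≤ dist w (c D) + dist (c D) (c (g n)) + dist (c (g n)) z :=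
        dist_triangle4 w (c D) (c (g n)) z
      rcases tot D (g n) with hc | hc
      · have h1 := key _ _ hc
        have h2 := hle (g n)
        have hwD : dist w (c D) = rad D - ε := by rw [hεdef]; ring
        calc dist w z ≤ dist w (c D) + dist (c D) (c (g n)) + dist (c (g n)) z := htri
          _ < (rad D - ε) + (rad (g n) - rad D) + ε / 2 := by
              rw [hwD]; apply add_lt_add_of_le_of_lt; apply add_le_add le_rfl; linarith
              exact hn2
          _ ≤ s := by linarith
      · have h1 := key _ _ hc
        have h2 := hle D
        have h3 := hg n
        have hDgn : dist (c D) (c (g n)) < ε / 2 := by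
          rw [dist_comm]
          linarith
        calc dist w z ≤ dist w (c D) + dist (c D) (c (g n)) + dist (c (g n)) z := htri
          _ < (rad D - ε) + ε / 2 + ε / 2 := by
              have hwD : dist w (c D) = rad D - ε := by rw [hεdef]; ring
              rw [hwD]
              apply add_lt_add (add_lt_add_of_le_of_lt le_rfl hDgn) hn2
          _ ≤ s := by linarith
    · intro hw
      rw [Metric.mem_ball] at hw
      set ε := s - dist w z with hεdef
      have hε : 0 < ε := by simp [hεdef]; linarith
      obtain ⟨N1, hN1⟩ := exists_nat_one_div_lt (half_pos hε)
      obtain ⟨N2, hN2⟩ := hzd (ε / 2) (half_pos hε)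
      set n := max N1 N2 with hndef
      have hn1 : (1 : ℝ) / (n + 1) < ε / 2 := lt_of_le_of_lt (hmono (le_max_left _ _)) hN1
      have hn2 : dist (c (g n)) z < ε / 2 := hN2 n (le_max_right _ _)
      have h3 := hg n
      refine ⟨g n, (g n).2, ?_⟩
      have : w ∈ Metric.ball (c (g n)) (rad (g n)) := by
        rw [Metric.mem_ball]
        calc dist w (c (g n)) ≤ dist w z + dist z (c (g n)) := dist_triangle _ _ _
          _ < (s - ε) + ε / 2 := by
              rw [dist_comm z]
              apply add_lt_add_of_le_of_lt (by rw [hεdef]; linarith) hn2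
          _ < rad (g n) := by linarith
      rw [← hballD (g n)] at this
      exact this
  refine ⟨⟨z, s, hspos, hU⟩, ?_⟩
  rw [hU, discRadius, diam_ball_complex z hspos.le]
  ring
end

section
/- Let F be a non-empty nested collection of closed discs in ℂ. Then the intersection of F is a closed disc or a singleton (in particular, it is non-empty). -/
open Metric Filter

lemma aux_dist_add_le {z₁ z₂ : ℂ} {r₁ r₂ : ℝ} (hr : 0 ≤ r₁)
    (h : Metric.closedBall z₁ r₁ ⊆ Metric.closedBall z₂ r₂) :
    dist z₁ z₂ + r₁ ≤ r₂ := by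
  rcases eq_or_ne z₁ z₂ with rfl | hne
  · have hmem : (z₁ + r₁) ∈ Metric.closedBall z₁ r₁ := by
      simp [Complex.dist_eq, abs_of_nonneg hr]
    have := h hmem
    simp only [Metric.mem_closedBall, Complex.dist_eq] at this
    simpa [Complex.dist_eq, abs_of_nonneg hr] using this
  · set d : ℝ := ‖z₁ - z₂‖ with hd
    have hdpos : 0 < d := by
      simpa [hd] using (norm_pos_iff.mpr (sub_ne_zero.2 hne))
    set u : ℂ := (z₁ - z₂) / d with hu
    have hau : ‖u‖ = 1 := by
      rw [hu, norm_div]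
      rw [Complex.norm_real, Real.norm_eq_abs, abs_of_nonneg hdpos.le, ← hd, div_self hdpos.ne']
    have hmem : (z₁ + r₁ * u) ∈ Metric.closedBall z₁ r₁ := by
      simp only [Metric.mem_closedBall, Complex.dist_eq]
      have : z₁ + r₁ * u - z₁ = r₁ * u := by ring
      rw [this, norm_mul, hau, mul_one, Complex.norm_real, Real.norm_eq_abs, abs_of_nonneg hr]
    have h2 := h hmem
    simp only [Metric.mem_closedBall, Complex.dist_eq] at h2
    have key : z₁ + ↑r₁ * u - z₂ = (↑d + ↑r₁) * u := by
      have : (↑d : ℂ) * u = z₁ - z₂ := by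
        rw [hu, mul_div_cancel₀]
        simpa [hd] using Complex.ofReal_ne_zero.2 hdpos.ne'
      rw [add_mul, this]; ring
    rw [key, norm_mul, hau, mul_one] at h2
    have : ‖(↑d + ↑r₁ : ℂ)‖ = d + r₁ := by
      rw [← Complex.ofReal_add, Complex.norm_real, Real.norm_eq_abs, abs_of_nonneg (by positivity)]
    rw [this] at h2
    simpa [Complex.dist_eq, ← hd] using h2

lemma aux_le_of_forall (a b : ℝ) (h : ∀ n : ℕ, a ≤ b + 2 / (n + 1)) : a ≤ b := by
  have htend : Filter.Tendsto (fun n : ℕ => b + 2 / (n + 1)) Filter.atTop (nhds b) := by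
    have h1 : Filter.Tendsto (fun n : ℕ => (1:ℝ) / (n + 1)) Filter.atTop (nhds 0) :=
      tendsto_one_div_add_atTop_nhds_zero_nat
    have := (h1.const_mul 2).const_add b
    simpa [mul_one_div, div_eq_mul_inv] using this
  exact ge_of_tendsto' htend h

/-- A closed disc in the complex plane: a set of the form `{w : |w - z| ≤ r}` with `r > 0`. -/
def IsClosedDisc (D : Set ℂ) : Prop := ∃ z : ℂ, ∃ r : ℝ, 0 < r ∧ D = Metric.closedBall z r

theorem inter_of_nested_closed_discs (F : Set (Set ℂ)) (hne : F.Nonempty)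
    (hchain : IsChain (· ⊆ ·) F) (hdisc : ∀ D ∈ F, IsClosedDisc D) :
    ∃ z : ℂ, ∃ r : ℝ, 0 ≤ r ∧ ⋂₀ F = Metric.closedBall z r := by
  simp only [IsClosedDisc] at hdisc
  choose! c ρ hpos hball using hdisc
  -- the infimum of the radii
  set S : Set ℝ := ρ '' F with hS
  have hSne : S.Nonempty := hne.image ρ
  have hSbdd : BddBelow S := by
    refine ⟨0, ?_⟩
    rintro s ⟨D, hD, rfl⟩
    exact (hpos D hD).le
  set R : ℝ := sInf S with hRdef
  have hR0 : 0 ≤ R := le_csInf hSne (by rintro s ⟨D, hD, rfl⟩; exact (hpos D hD).le)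
  have hRle : ∀ D ∈ F, R ≤ ρ D := fun D hD => csInf_le hSbdd ⟨D, hD, rfl⟩
  -- a sequence of discs with radii approaching R
  have hseq : ∀ n : ℕ, ∃ D, D ∈ F ∧ ρ D < R + 1 / (n + 1) := by
    intro n
    have hlt : R < R + 1 / (n + 1) := by
      have : (0:ℝ) < 1 / (n + 1) := by positivity
      linarith
    obtain ⟨s, ⟨D, hD, rfl⟩, hs⟩ := exists_lt_of_csInf_lt hSne hlt
    exact ⟨D, hD, hs⟩
  choose Ds hDsF hDsr using hseq
  have hinv : ∀ n : ℕ, (0:ℝ) < 1 / (n + 1) := fun n => by positivity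
  -- key comparison for members of the chain
  have hcomp : ∀ D ∈ F, ∀ E ∈ F, D ⊆ E → dist (c D) (c E) + ρ D ≤ ρ E := by
    intro D hD E hE hsub
    have := hsub
    rw [hball D hD, hball E hE] at this
    exact aux_dist_add_le (hpos D hD).le this
  -- symmetric bound on distances of centers of the sequence
  have hbound : ∀ n m : ℕ, dist (c (Ds n)) (c (Ds m)) ≤
      (ρ (Ds n) - R) + (ρ (Ds m) - R) := by
    intro n m
    rcases hchain.total (hDsF n) (hDsF m) with h | h
    · have := hcomp _ (hDsF n) _ (hDsF m) h
      have h1 := hRle _ (hDsF n)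
      have h2 := hRle _ (hDsF m)
      linarith
    · have := hcomp _ (hDsF m) _ (hDsF n) h
      have h1 := hRle _ (hDsF n)
      have h2 := hRle _ (hDsF m)
      rw [dist_comm]
      linarith
  have hbound2 : ∀ n m : ℕ, dist (c (Ds n)) (c (Ds m)) ≤ 1 / (n + 1) + 1 / (m + 1) := by
    intro n m
    have h1 := (hDsr n); have h2 := (hDsr m)
    have := hbound n m
    linarith
  -- Cauchy
  have hcauchy : CauchySeq (fun n => c (Ds n)) := by
    apply cauchySeq_of_le_tendsto_0 (fun N : ℕ => 2 / (N + 1))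
    · intro n m N hn hm
      have h1 : (1:ℝ) / (n + 1) ≤ 1 / (N + 1) := by
        apply one_div_le_one_div_of_le (by positivity)
        have : (N:ℝ) ≤ n := Nat.cast_le.2 hn
        linarith
      have h2 : (1:ℝ) / (m + 1) ≤ 1 / (N + 1) := by
        apply one_div_le_one_div_of_le (by positivity)
        have : (N:ℝ) ≤ m := Nat.cast_le.2 hm
        linarith
      have := hbound2 n m
      calc dist (c (Ds n)) (c (Ds m)) ≤ 1 / (n + 1) + 1 / (m + 1) := hbound2 n m
        _ ≤ 2 / (N + 1) := by rw [show (2:ℝ) / (N+1) = 1/(N+1) + 1/(N+1) by ring]; linarith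
    · have h1 : Filter.Tendsto (fun n : ℕ => (1:ℝ) / (n + 1)) Filter.atTop (nhds 0) :=
        tendsto_one_div_add_atTop_nhds_zero_nat
      have := h1.const_mul 2
      simpa [mul_one_div, div_eq_mul_inv] using this
  obtain ⟨z, hz⟩ := cauchySeq_tendsto_of_complete hcauchy
  -- distance of each center to the limit
  have hcz : ∀ n : ℕ, dist (c (Ds n)) z ≤ ρ (Ds n) - R := by
    intro n
    have htend1 : Filter.Tendsto (fun m => dist (c (Ds n)) (c (Ds m))) Filter.atTop
        (nhds (dist (c (Ds n)) z)) := tendsto_const_nhds.dist hz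
    have htend2 : Filter.Tendsto (fun m : ℕ => (ρ (Ds n) - R) + 1 / (m + 1)) Filter.atTop
        (nhds (ρ (Ds n) - R)) := by
      have h1 : Filter.Tendsto (fun m : ℕ => (1:ℝ) / (m + 1)) Filter.atTop (nhds 0) :=
        tendsto_one_div_add_atTop_nhds_zero_nat
      simpa using h1.const_add (ρ (Ds n) - R)
    refine le_of_tendsto_of_tendsto' htend1 htend2 (fun m => ?_)
    have := hbound n m
    have h2 := hDsr m
    linarith
  have hsubn : ∀ n : ℕ, Metric.closedBall z R ⊆ Ds n := by
    intro n
    rw [hball _ (hDsF n)]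
    apply Metric.closedBall_subset_closedBall'
    have := hcz n
    rw [dist_comm]
    linarith
  refine ⟨z, R, hR0, ?_⟩
  apply Set.Subset.antisymm
  · -- ⋂₀ F ⊆ closedBall z R
    intro w hw
    simp only [Set.mem_sInter] at hw
    rw [Metric.mem_closedBall]
    apply aux_le_of_forall
    intro n
    have hwn := hw _ (hDsF n)
    rw [hball _ (hDsF n), Metric.mem_closedBall] at hwn
    have h1 := hcz n
    have h2 := hDsr n
    calc dist w z ≤ dist w (c (Ds n)) + dist (c (Ds n)) z := dist_triangle _ _ _
      _ ≤ R + 2 / (n + 1) := by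
          rw [show (2:ℝ) / (n+1) = 1/(n+1) + 1/(n+1) by ring]
          linarith
  · -- closedBall z R ⊆ ⋂₀ F
    intro w hw
    rw [Set.mem_sInter]
    intro D hD
    by_cases hcase : ∃ n, Ds n ⊆ D
    · obtain ⟨n, hn⟩ := hcase
      exact hn (hsubn n hw)
    · push_neg at hcase
      have hsub : ∀ n, D ⊆ Ds n := by
        intro n
        rcases hchain.total hD (hDsF n) with h | h
        · exact h
        · exact absurd h (hcase n)
      -- D's radius is exactly R and its center is z
      have hdist0 : dist (c D) z ≤ 0 := by
        apply aux_le_of_forall _ 0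
        intro n
        have h1 := hcomp _ hD _ (hDsF n) (hsub n)
        have h2 := hcz n
        have h3 := hDsr n
        have h4 := hRle _ hD
        calc dist (c D) z ≤ dist (c D) (c (Ds n)) + dist (c (Ds n)) z := dist_triangle _ _ _
          _ ≤ 0 + 2 / (n + 1) := by
              rw [show (2:ℝ) / (n+1) = 1/(n+1) + 1/(n+1) by ring]
              linarith
      have hcDz : c D = z := by
        have := dist_nonneg (x := c D) (y := z)
        have : dist (c D) z = 0 := le_antisymm hdist0 this
        exact dist_eq_zero.1 this
      rw [hball D hD, hcDz]
      exact Metric.closedBall_subset_closedBall (hRle D hD) hw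
end

section
/- Let F be a non-empty nested collection of closed discs in ℂ. Then there is a nested decreasing sequence (D_n) in F whose intersection equals the intersection of F, and the radius of the intersection (a closed disc or singleton) equals the infimum of the radii of the discs in F. -/
open Metric Filter Topology

lemma diam_cb (z : ℂ) (r : ℝ) (hr : 0 ≤ r) : Metric.diam (Metric.closedBall z r) = 2 * r := by
  apply le_antisymm (Metric.diam_closedBall hr)
  have h1 : z + r ∈ Metric.closedBall z r := by
    simp [Metric.mem_closedBall, dist_eq_norm, hr, abs_of_nonneg, Complex.norm_real]
  have h2 : z - r ∈ Metric.closedBall z r := by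
    simp [Metric.mem_closedBall, dist_eq_norm, hr, abs_of_nonneg, Complex.norm_real]
  have hle := Metric.dist_le_diam_of_mem (Metric.isBounded_closedBall) h1 h2
  have hd : dist ((z : ℂ) + r) (z - r) = 2 * r := by
    rw [dist_eq_norm, show (z + r) - (z - r) = ((2*r : ℝ) : ℂ) by push_cast; ring]
    simp [abs_of_nonneg, hr, Complex.norm_real]
  linarith [hd ▸ hle]

lemma discRadius_cb (z : ℂ) (r : ℝ) (hr : 0 ≤ r) :
    discRadius (Metric.closedBall z r) = r := by
  rw [discRadius, diam_cb z r hr]; ring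

lemma cb_subset (z1 z2 : ℂ) (r1 r2 : ℝ) (h1 : 0 ≤ r1)
    (h : Metric.closedBall z1 r1 ⊆ Metric.closedBall z2 r2) : dist z1 z2 + r1 ≤ r2 := by
  by_cases hz : z1 = z2
  · subst hz
    have := h (show z1 + r1 ∈ Metric.closedBall z1 r1 by
      simp [Metric.mem_closedBall, dist_eq_norm, h1, abs_of_nonneg, Complex.norm_real])
    rw [Metric.mem_closedBall, dist_eq_norm] at this
    simp only [add_sub_cancel_left, Complex.norm_real, Real.norm_eq_abs,
      abs_of_nonneg h1] at this
    simpa using by linarith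
  · have hne : z1 - z2 ≠ 0 := sub_ne_zero.mpr hz
    have hnorm : (0:ℝ) < ‖z1 - z2‖ := norm_pos_iff.mpr hne
    set u : ℂ := (z1 - z2) / (‖z1 - z2‖ : ℂ) with hu_def
    have hz1 : ((‖z1 - z2‖ : ℝ) : ℂ) ≠ 0 := by exact_mod_cast hnorm.ne'
    have hu : ‖u‖ = 1 := by
      rw [hu_def, norm_div, Complex.norm_real, Real.norm_eq_abs, abs_of_pos hnorm,
        div_self hnorm.ne']
    have hp : z1 + r1 • u ∈ Metric.closedBall z1 r1 := by
      rw [Metric.mem_closedBall, dist_eq_norm]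
      simp only [add_sub_cancel_left, norm_smul, hu, mul_one, Real.norm_eq_abs,
        abs_of_nonneg h1]
      exact le_rfl
    have hmem := h hp
    rw [Metric.mem_closedBall, dist_eq_norm] at hmem
    have heq : z1 + r1 • u - z2 = ((‖z1 - z2‖ + r1 : ℝ) : ℂ) * u := by
      have : z1 - z2 = (‖z1 - z2‖ : ℂ) * u := by
        rw [hu_def, mul_div_assoc']
        rw [mul_comm, mul_div_assoc, div_self hz1, mul_one]
      push_cast
      rw [add_mul, ← this]
      simp [smul_eq_mul]
      ring
    rw [heq, norm_mul, hu, mul_one] at hmem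
    rw [show ‖((‖z1 - z2‖ + r1 : ℝ) : ℂ)‖ = ‖z1 - z2‖ + r1 by
      rw [Complex.norm_real, Real.norm_eq_abs, abs_of_nonneg (by positivity)]] at hmem
    rw [dist_eq_norm]
    linarith

theorem exists_decreasing_sequence_of_nested_closed_discs (F : Set (Set ℂ)) (hne : F.Nonempty)
    (hchain : IsChain (· ⊆ ·) F) (hdisc : ∀ D ∈ F, IsClosedDisc D) :
    ∃ D : ℕ → Set ℂ, (∀ n, D n ∈ F) ∧ (∀ n, D (n + 1) ⊆ D n) ∧
      (⋂ n, D n) = ⋂₀ F ∧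
      discRadius (⋂₀ F) = sInf (discRadius '' F) := by
  classical
  choose! z ρ hρ hball using hdisc
  set s := discRadius '' F with hs_def
  have hs_ne : s.Nonempty := hne.image _
  have hbdd : BddBelow s := by
    refine ⟨0, ?_⟩
    rintro x ⟨D, hD, rfl⟩
    exact div_nonneg Metric.diam_nonneg (by norm_num)
  set r := sInf s with hr_def
  have hr0 : 0 ≤ r := by
    refine le_csInf hs_ne ?_
    rintro x ⟨D, hD, rfl⟩
    exact div_nonneg Metric.diam_nonneg (by norm_num)
  have hrad : ∀ D ∈ F, discRadius D = ρ D := fun D hD => by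
    conv_lhs => rw [hball D hD]
    exact discRadius_cb _ _ (hρ D hD).le
  have hrle : ∀ D ∈ F, r ≤ discRadius D := fun D hD => csInf_le hbdd ⟨D, hD, rfl⟩
  -- a disc with smaller radius is contained in one with bigger radius
  have hmono : ∀ A ∈ F, ∀ B ∈ F, discRadius A ≤ discRadius B → A ⊆ B := by
    intro A hA B hB hle
    rcases hchain.total hA hB with h | h
    · exact h
    · have hbA : Bornology.IsBounded A := by
        rw [hball A hA]; exact Metric.isBounded_closedBall
      have hd : Metric.diam B ≤ Metric.diam A := Metric.diam_mono h hbA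
      have heq : discRadius A = discRadius B := le_antisymm hle (by
        rw [discRadius, discRadius]; linarith)
      have hsub : Metric.closedBall (z B) (ρ B) ⊆ Metric.closedBall (z A) (ρ A) := by
        rw [← hball A hA, ← hball B hB]; exact h
      have hdist := cb_subset _ _ _ _ (hρ B hB).le hsub
      have hρeq : ρ A = ρ B := by
        rw [← hrad A hA, ← hrad B hB, heq]
      have hz : dist (z B) (z A) = 0 := le_antisymm (by linarith) dist_nonneg
      have : z B = z A := by rwa [dist_eq_zero] at hz
      rw [hball A hA, hball B hB, this, hρeq]
  -- choose discs with radius close to the infimum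
  have hE : ∀ n : ℕ, ∃ D ∈ F, discRadius D < r + 1/(n+1) := by
    intro n
    have hlt : r < r + 1/(n+1) := by
      have : (0:ℝ) < 1/(n+1) := by positivity
      linarith
    obtain ⟨x, hx, hxlt⟩ := exists_lt_of_csInf_lt hs_ne hlt
    obtain ⟨D, hD, rfl⟩ := hx
    exact ⟨D, hD, hxlt⟩
  choose E hEF hEr using hE
  -- the nested sequence
  set g : ℕ → Set ℂ := fun n => Nat.rec (E 0)
    (fun k ih => if discRadius (E (k+1)) ≤ discRadius ih then E (k+1) else ih) n with hg_def
  have hg0 : g 0 = E 0 := rfl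
  have hgsucc : ∀ n, g (n+1) =
      if discRadius (E (n+1)) ≤ discRadius (g n) then E (n+1) else g n := fun n => rfl
  have hgF : ∀ n, g n ∈ F := by
    intro n
    induction n with
    | zero => exact hEF 0
    | succ k ih =>
      rw [hgsucc]
      split_ifs
      · exact hEF (k+1)
      · exact ih
  have hgr : ∀ n, discRadius (g n) ≤ discRadius (E n) := by
    intro n
    cases n with
    | zero => exact le_rfl
    | succ k =>
      rw [hgsucc]
      split_ifs with h
      · exact le_rfl
      · exact (not_le.mp h).le
  have hgstep : ∀ n, g (n+1) ⊆ g n := by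
    intro n
    rw [hgsucc]
    split_ifs with h
    · exact hmono _ (hEF (n+1)) _ (hgF n) h
    · exact subset_rfl
  have hganti : ∀ m n, m ≤ n → g n ⊆ g m := by
    intro m n hmn
    induction n with
    | zero => rw [Nat.le_zero.mp hmn]
    | succ k ih =>
      rcases Nat.lt_or_ge m (k+1) with h | h
      · exact (hgstep k).trans (ih (Nat.lt_succ_iff.mp h))
      · rw [le_antisymm hmn h]
  have hgrad : ∀ n, discRadius (g n) < r + 1/(n+1) :=
    fun n => lt_of_le_of_lt (hgr n) (hEr n)
  have hgrad' : ∀ n, r ≤ discRadius (g n) := fun n => hrle _ (hgF n)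
  -- convergence of radii
  have htend : Tendsto (fun n : ℕ => discRadius (g n)) atTop (𝓝 r) := by
    have hup : Tendsto (fun n : ℕ => r + 1/(n+1 : ℝ)) atTop (𝓝 r) := by
      have h0 : Tendsto (fun n : ℕ => 1 / ((n : ℝ) + 1)) atTop (𝓝 0) :=
        tendsto_one_div_add_atTop_nhds_zero_nat
      simpa using (tendsto_const_nhds (x := r) (f := (atTop : Filter ℕ))).add h0
    exact tendsto_of_tendsto_of_tendsto_of_le_of_le tendsto_const_nhds hup
      (fun n => hgrad' n) (fun n => (hgrad n).le)
  -- key distance estimate between centers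
  have hdist : ∀ m n, m ≤ n →
      dist (z (g n)) (z (g m)) + discRadius (g n) ≤ discRadius (g m) := by
    intro m n hmn
    have hsub : g n ⊆ g m := hganti m n hmn
    rw [hball _ (hgF n), hball _ (hgF m)] at hsub
    have h := cb_subset _ _ _ _ (hρ _ (hgF n)).le hsub
    rw [← hrad _ (hgF n), ← hrad _ (hgF m)] at h
    exact h
  -- the centers form a Cauchy sequence
  have hcauchy : CauchySeq (fun n => z (g n)) := by
    apply cauchySeq_of_le_tendsto_0 (fun N => 2 * (discRadius (g N) - r))
    · intro n m N hn hm
      have h1 := hdist N n hn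
      have h2 := hdist N m hm
      have := dist_triangle (z (g n)) (z (g N)) (z (g m))
      rw [dist_comm (z (g N)) (z (g m))] at this
      have := hgrad' n; have := hgrad' m
      linarith
    · have : Tendsto (fun N : ℕ => discRadius (g N) - r) atTop (𝓝 (r - r)) :=
        htend.sub tendsto_const_nhds
      simpa using this.const_mul 2
  obtain ⟨w, hw⟩ := cauchySeq_tendsto_of_complete hcauchy
  have hzw : ∀ n, dist w (z (g n)) ≤ discRadius (g n) - r := by
    intro n
    have hlim : Tendsto (fun m => dist (z (g m)) (z (g n))) atTop
        (𝓝 (dist w (z (g n)))) := hw.dist tendsto_const_nhds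
    refine le_of_tendsto hlim ?_
    filter_upwards [eventually_ge_atTop n] with m hm
    have := hdist n m hm
    have := hgrad' m
    linarith
  have hball_sub : ∀ n, Metric.closedBall w r ⊆ g n := by
    intro n x hx
    rw [Metric.mem_closedBall] at hx
    rw [hball _ (hgF n), Metric.mem_closedBall, ← hrad _ (hgF n)]
    calc dist x (z (g n)) ≤ dist x w + dist w (z (g n)) := dist_triangle _ _ _
      _ ≤ r + (discRadius (g n) - r) := add_le_add hx (hzw n)
      _ = discRadius (g n) := by ring
  -- intersection equality
  have hInter : (⋂ n, g n) = ⋂₀ F := by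
    apply subset_antisymm
    · intro x hx
      rw [Set.mem_sInter]
      intro A hA
      by_cases hc : ∃ n, discRadius (g n) ≤ discRadius A
      · obtain ⟨n, hn⟩ := hc
        exact hmono _ (hgF n) _ hA hn (Set.mem_iInter.mp hx n)
      · push_neg at hc
        have hsubA : ∀ n, A ⊆ g n := fun n => hmono _ hA _ (hgF n) (hc n).le
        have hdA : ∀ n, dist (z A) (z (g n)) + discRadius A ≤ discRadius (g n) := by
          intro n
          have hs := hsubA n
          rw [hball _ hA, hball _ (hgF n)] at hs
          have h := cb_subset _ _ _ _ (hρ _ hA).le hs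
          rw [← hrad _ hA, ← hrad _ (hgF n)] at h
          exact h
        -- radius of A equals r
        have hrA : discRadius A = r := by
          refine le_antisymm (ge_of_tendsto htend ?_) (hrle A hA)
          filter_upwards with n
          have := hdA n
          have := dist_nonneg (x := z A) (y := z (g n))
          linarith
        -- centers converge to z A
        have hzA : Tendsto (fun n => z (g n)) atTop (𝓝 (z A)) := by
          rw [tendsto_iff_dist_tendsto_zero]
          apply squeeze_zero (fun n => dist_nonneg)
            (g := fun n => discRadius (g n) - r)
          · intro n
            have := hdA n
            rw [dist_comm]
            linarith [hrle A hA, hrA]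
          · have : Tendsto (fun n : ℕ => discRadius (g n) - r) atTop (𝓝 (r - r)) :=
              htend.sub tendsto_const_nhds
            simpa using this
        have hwA : w = z A := tendsto_nhds_unique hw hzA
        -- x is within r of w = z A
        have hxw : dist x (z A) ≤ r := by
          have hlim : Tendsto (fun n => dist x (z (g n))) atTop (𝓝 (dist x (z A))) :=
            tendsto_const_nhds.dist hzA
          refine le_of_tendsto_of_tendsto' hlim htend ?_
          intro n
          have hxn := Set.mem_iInter.mp hx n
          rw [hball _ (hgF n), Metric.mem_closedBall, ← hrad _ (hgF n)] at hxn
          exact hxn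
        rw [hball A hA, Metric.mem_closedBall, ← hrad A hA, hrA]
        exact hxw
    · intro x hx
      exact Set.mem_iInter.mpr fun n => hx _ (hgF n)
  -- radius of the intersection
  have h1 : Metric.closedBall w r ⊆ ⋂₀ F := by
    rw [← hInter]
    exact Set.subset_iInter hball_sub
  have h2 : ∀ n, ⋂₀ F ⊆ g n := fun n => Set.sInter_subset_of_mem (hgF n)
  have hbd0 : Bornology.IsBounded (g 0) := by
    rw [hball _ (hgF 0)]; exact Metric.isBounded_closedBall
  have hub : Metric.diam (⋂₀ F) ≤ 2 * r := by
    have hb : ∀ n, Metric.diam (⋂₀ F) ≤ 2 * discRadius (g n) := by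
      intro n
      have hbn : Bornology.IsBounded (g n) := by
        rw [hball _ (hgF n)]; exact Metric.isBounded_closedBall
      have h := Metric.diam_mono (h2 n) hbn
      have hgn : Metric.diam (g n) = 2 * discRadius (g n) := by
        rw [hrad _ (hgF n)]
        conv_lhs => rw [hball _ (hgF n)]
        rw [diam_cb _ _ (hρ _ (hgF n)).le]
      linarith [hgn ▸ h]
    exact ge_of_tendsto (htend.const_mul 2) (Filter.Eventually.of_forall hb)
  have hlb : 2 * r ≤ Metric.diam (⋂₀ F) := by
    have hbd : Bornology.IsBounded (⋂₀ F) := hbd0.subset (h2 0)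
    have h := Metric.diam_mono h1 hbd
    rw [diam_cb w r hr0] at h
    exact h
  refine ⟨g, hgF, hgstep, hInter, ?_⟩
  show Metric.diam (⋂₀ F) / 2 = r
  linarith
end

section
/- Composition of allocation maps is an allocation map: if D1, D2, D3 are Swiss cheeses and f : D̃1 → D̃2 and g : D̃2 → D̃3 are allocation maps, then g ∘ f : D̃1 → D̃3 is an allocation map. -/
/-- A Swiss cheese: a closed disc `Δ` together with a countable collection `𝒟` of open discs. -/
structure SwissCheese where
  Δ : Set ℂ
  𝒟 : Set (Set ℂ)
  hΔ : IsClosedDisc Δ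
  h𝒟 : ∀ D ∈ 𝒟, IsOpenDisc D
  hcount : 𝒟.Countable

/-- `D̃ = 𝒟 ∪ {ℂ ∖ Δ}`. -/
def SwissCheese.tilde (D : SwissCheese) : Set (Set ℂ) := D.𝒟 ∪ {D.Δᶜ}

/-- The associated Swiss cheese set `X_D = Δ ∖ ⋃ 𝒟`. -/
def SwissCheese.X (D : SwissCheese) : Set ℂ := D.Δ \ ⋃₀ D.𝒟

/-- The (possibly infinite) sum of the radii of a collection of discs. -/
noncomputable def radSum (S : Set (Set ℂ)) : ENNReal :=
  ∑' D : S, ENNReal.ofReal (discRadius D)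

/-- `δ(D) = r(Δ) − Σ_{D'∈𝒟} r(D')`, possibly `−∞`. -/
noncomputable def SwissCheese.delta (D : SwissCheese) : EReal :=
  (discRadius D.Δ : EReal) - ((radSum D.𝒟 : ENNReal) : EReal)

/-- An allocation map between Swiss cheeses. -/
structure IsAllocationMap (D E : SwissCheese) (f : Set ℂ → Set ℂ) : Prop where
  maps_to : ∀ U ∈ D.tilde, f U ∈ E.tilde
  a1 : ∀ U ∈ D.tilde, U ⊆ f U
  a2 : ENNReal.ofReal (discRadius D.Δ - discRadius E.Δ) ≤
      radSum {U | U ∈ D.𝒟 ∧ f U = E.Δᶜ}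
  a3 : ∀ E' ∈ E.𝒟, ENNReal.ofReal (discRadius E') ≤ radSum {U | U ∈ D.𝒟 ∧ f U = E'}

noncomputable def discW (D : Set ℂ) : ENNReal := ENNReal.ofReal (discRadius D)

lemma radSum_eq_tsum_indicator (S : Set (Set ℂ)) :
    radSum S = ∑' D : Set ℂ, S.indicator discW D := tsum_subtype S discW

lemma radSum_mono {S T : Set (Set ℂ)} (h : S ⊆ T) : radSum S ≤ radSum T := by
  rw [radSum_eq_tsum_indicator, radSum_eq_tsum_indicator]
  exact ENNReal.tsum_le_tsum fun D =>
    Set.indicator_le_indicator_of_subset h (fun _ => zero_le) D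

lemma radSum_union_ge {A B : Set (Set ℂ)} (h : Disjoint A B) :
    radSum A + radSum B ≤ radSum (A ∪ B) := by
  rw [radSum_eq_tsum_indicator, radSum_eq_tsum_indicator, radSum_eq_tsum_indicator,
    ← ENNReal.tsum_add]
  refine ENNReal.tsum_le_tsum fun D => ?_
  rw [Set.indicator_union_of_disjoint h]

lemma tsum_fiber_le (𝒟 : Set (Set ℂ)) (f : Set ℂ → Set ℂ) (T : Set (Set ℂ)) :
    ∑' E : T, radSum {U | U ∈ 𝒟 ∧ f U = (E : Set ℂ)} ≤ radSum {U | U ∈ 𝒟 ∧ f U ∈ T} := by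
  calc ∑' E : T, radSum {U | U ∈ 𝒟 ∧ f U = (E : Set ℂ)}
      = ∑' E : T, ∑' x : Set ℂ, ({U | U ∈ 𝒟 ∧ f U = (E : Set ℂ)}).indicator discW x := by
        simp_rw [radSum_eq_tsum_indicator]
    _ = ∑' x : Set ℂ, ∑' E : T, ({U | U ∈ 𝒟 ∧ f U = (E : Set ℂ)}).indicator discW x :=
        ENNReal.tsum_comm
    _ ≤ ∑' x : Set ℂ, ({U | U ∈ 𝒟 ∧ f U ∈ T}).indicator discW x := ?_
    _ = radSum {U | U ∈ 𝒟 ∧ f U ∈ T} := (radSum_eq_tsum_indicator _).symm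
  refine ENNReal.tsum_le_tsum fun x => ?_
  by_cases hx : x ∈ 𝒟 ∧ f x ∈ T
  · have h1 : ∑' E : T, ({U | U ∈ 𝒟 ∧ f U = (E : Set ℂ)}).indicator discW x = discW x := by
      rw [tsum_eq_single (⟨f x, hx.2⟩ : T) ?_]
      · refine Set.indicator_of_mem ?_ discW
        exact Set.mem_setOf_eq ▸ ⟨hx.1, rfl⟩
      · intro E hE
        refine Set.indicator_of_notMem ?_ discW
        intro hmem
        rw [Set.mem_setOf_eq] at hmem
        exact hE (Subtype.ext hmem.2.symm)
    rw [h1]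
    have hx' : x ∈ {U | U ∈ 𝒟 ∧ f U ∈ T} := Set.mem_setOf_eq ▸ hx
    rw [Set.indicator_of_mem hx' discW]
  · have h0 : ∀ E : T, ({U | U ∈ 𝒟 ∧ f U = (E : Set ℂ)}).indicator discW x = 0 := by
      intro E
      refine Set.indicator_of_notMem ?_ discW
      intro hmem
      rw [Set.mem_setOf_eq] at hmem
      exact hx ⟨hmem.1, hmem.2 ▸ E.2⟩
    simp [h0]

lemma not_compl_closedBall_subset_ball (z2 z : ℂ) (r2 r : ℝ) :
    ¬ ((Metric.closedBall z2 r2)ᶜ ⊆ Metric.ball z r) := by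
  intro h
  set c : ℝ := max r2 0 + max r 0 + ‖z - z2‖ + 1 with hc
  have hc0 : (0:ℝ) ≤ c := by positivity
  have hnorm : ‖((c:ℂ))‖ = c := by rw [Complex.norm_real, Real.norm_of_nonneg hc0]
  have h1 : z2 + (c:ℂ) ∈ (Metric.closedBall z2 r2)ᶜ := by
    simp only [Set.mem_compl_iff, Metric.mem_closedBall, not_le, dist_eq_norm,
      add_sub_cancel_left, hnorm]
    have := le_max_left r2 0
    have := le_max_right r 0
    have := norm_nonneg (z - z2)
    linarith
  have h2 := h h1
  rw [Metric.mem_ball, dist_eq_norm] at h2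
  have h3 : ‖(z2 + (c:ℂ)) - z2‖ - ‖z - z2‖ ≤ ‖(z2 + (c:ℂ)) - z‖ := by
    have := norm_sub_norm_le ((z2 + (c:ℂ)) - z2) (z - z2)
    have heq : ((z2 + (c:ℂ)) - z2) - (z - z2) = (z2 + (c:ℂ)) - z := by ring
    rwa [heq] at this
  rw [add_sub_cancel_left, hnorm] at h3
  have := le_max_left r 0
  have := le_max_right r2 0
  linarith

lemma not_compl_subset_openDisc (E : SwissCheese) {V : Set ℂ} (hV : IsOpenDisc V) :
    ¬ (E.Δᶜ ⊆ V) := by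
  obtain ⟨z2, r2, _, h2⟩ := E.hΔ
  obtain ⟨z, r, _, hball⟩ := hV
  rw [h2, hball]
  exact not_compl_closedBall_subset_ball z2 z r2 r

lemma compl_not_mem (E : SwissCheese) : E.Δᶜ ∉ E.𝒟 := fun h =>
  not_compl_subset_openDisc E (E.h𝒟 _ h) subset_rfl

theorem comp_allocationMap (D1 D2 D3 : SwissCheese) (f g : Set ℂ → Set ℂ)
    (hf : IsAllocationMap D1 D2 f) (hg : IsAllocationMap D2 D3 g) :
    IsAllocationMap D1 D3 (g ∘ f) := by
  have hcm : D2.Δᶜ ∈ D2.tilde := Set.mem_union_right _ rfl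
  have hgc : g D2.Δᶜ = D3.Δᶜ := by
    rcases hg.maps_to D2.Δᶜ hcm with h | h
    · exact absurd (hg.a1 D2.Δᶜ hcm) (not_compl_subset_openDisc D2 (D3.h𝒟 _ h))
    · exact h
  constructor
  · intro U hU
    exact hg.maps_to _ (hf.maps_to U hU)
  · intro U hU
    exact (hf.a1 U hU).trans (hg.a1 _ (hf.maps_to U hU))
  · set A := {U | U ∈ D1.𝒟 ∧ f U = D2.Δᶜ} with hA
    set B := {U | U ∈ D1.𝒟 ∧ f U ∈ {E | E ∈ D2.𝒟 ∧ g E = D3.Δᶜ}} with hBdef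
    have hdisj : Disjoint A B := by
      rw [Set.disjoint_left]
      rintro U ⟨_, hfA⟩ ⟨_, hfB, _⟩
      exact compl_not_mem D2 (hfA ▸ hfB)
    have hsub : A ∪ B ⊆ {U | U ∈ D1.𝒟 ∧ (g ∘ f) U = D3.Δᶜ} := by
      rintro U (⟨h1, h2⟩ | ⟨h1, _, h3⟩)
      · exact ⟨h1, by simp only [Function.comp_apply, h2, hgc]⟩
      · exact ⟨h1, h3⟩
    have hB : radSum {E | E ∈ D2.𝒟 ∧ g E = D3.Δᶜ} ≤ radSum B := by
      calc radSum {E | E ∈ D2.𝒟 ∧ g E = D3.Δᶜ}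
          ≤ ∑' E : {E | E ∈ D2.𝒟 ∧ g E = D3.Δᶜ},
              radSum {U | U ∈ D1.𝒟 ∧ f U = (E : Set ℂ)} :=
            ENNReal.tsum_le_tsum fun E => hf.a3 (E : Set ℂ) E.2.1
        _ ≤ radSum B := tsum_fiber_le D1.𝒟 f _
    calc ENNReal.ofReal (discRadius D1.Δ - discRadius D3.Δ)
        ≤ ENNReal.ofReal (discRadius D1.Δ - discRadius D2.Δ)
          + ENNReal.ofReal (discRadius D2.Δ - discRadius D3.Δ) := by
          rw [show discRadius D1.Δ - discRadius D3.Δ =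
            (discRadius D1.Δ - discRadius D2.Δ) + (discRadius D2.Δ - discRadius D3.Δ) by ring]
          exact ENNReal.ofReal_add_le
      _ ≤ radSum A + radSum B := add_le_add hf.a2 (hg.a2.trans hB)
      _ ≤ radSum (A ∪ B) := radSum_union_ge hdisj
      _ ≤ radSum {U | U ∈ D1.𝒟 ∧ (g ∘ f) U = D3.Δᶜ} := radSum_mono hsub
  · intro E' hE'
    calc ENNReal.ofReal (discRadius E')
        ≤ radSum {E | E ∈ D2.𝒟 ∧ g E = E'} := hg.a3 E' hE'
      _ ≤ ∑' E : {E | E ∈ D2.𝒟 ∧ g E = E'}, radSum {U | U ∈ D1.𝒟 ∧ f U = (E : Set ℂ)} :=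
          ENNReal.tsum_le_tsum fun E => hf.a3 (E : Set ℂ) E.2.1
      _ ≤ radSum {U | U ∈ D1.𝒟 ∧ f U ∈ {E | E ∈ D2.𝒟 ∧ g E = E'}} := tsum_fiber_le _ _ _
      _ ≤ radSum {U | U ∈ D1.𝒟 ∧ (g ∘ f) U = E'} := by
          refine radSum_mono ?_
          rintro U ⟨h1, _, h3⟩
          exact ⟨h1, h3⟩
end

section
/- The identity map on D̃ is an allocation map for any Swiss cheese D = (Δ, 𝒟). Moreover, if the sum of the radii of the discs in 𝒟 is finite, then the identity is the unique allocation map from D̃ to itself. -/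
lemma discRadius_ball (z : ℂ) {r : ℝ} (hr : 0 ≤ r) :
    discRadius (Metric.ball z r) = r := by
  simp [discRadius, diam_ball_complex z hr]

lemma ball_subset_ball_center_eq {z w : ℂ} {r : ℝ} (hr : 0 < r)
    (h : Metric.ball z r ⊆ Metric.ball w r) : z = w := by
  by_contra hzw
  set d : ℝ := dist z w with hd
  have hd0 : 0 < d := dist_pos.2 hzw
  set u : ℂ := (z - w) / (d : ℂ) with hu
  have hzw' : z - w ≠ 0 := sub_ne_zero.2 hzw
  have hnu : ‖u‖ = 1 := by
    rw [hu, norm_div, Complex.norm_real]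
    have : ‖z - w‖ = d := by rw [hd, dist_eq_norm]
    rw [this, Real.norm_eq_abs, abs_of_pos hd0, div_self hd0.ne']
  set t : ℝ := r - min d r / 2 with htdef
  have hmin : 0 < min d r := lt_min hd0 hr
  have ht0 : 0 ≤ t := by have := min_le_right d r; simp only [htdef]; linarith
  have htr : t < r := by simp only [htdef]; linarith
  have hp : z + (t : ℂ) * u ∈ Metric.ball z r := by
    rw [Metric.mem_ball, dist_eq_norm]
    have : z + (t : ℂ) * u - z = (t : ℂ) * u := by ring
    rw [this, norm_mul, hnu, Complex.norm_real, Real.norm_eq_abs, abs_of_nonneg ht0, mul_one]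
    exact htr
  have hq := h hp
  rw [Metric.mem_ball, dist_eq_norm] at hq
  have hzwu : z - w = (d : ℂ) * u := by
    rw [hu, mul_div_cancel₀]
    exact_mod_cast hd0.ne'
  have : z + (t : ℂ) * u - w = ((d + t : ℝ) : ℂ) * u := by
    push_cast
    rw [add_mul, ← hzwu]; ring
  rw [this, norm_mul, hnu, Complex.norm_real, mul_one, Real.norm_eq_abs,
    abs_of_nonneg (by linarith)] at hq
  have : r ≤ d + t := by simp only [htdef]; have := min_le_left d r; linarith
  linarith

lemma discRadius_pos {U : Set ℂ} (h : IsOpenDisc U) : 0 < discRadius U := by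
  obtain ⟨z, r, hr, rfl⟩ := h
  rw [discRadius_ball z hr.le]; exact hr

lemma discRadius_mono {U V : Set ℂ} (hV : IsOpenDisc V) (h : U ⊆ V) :
    discRadius U ≤ discRadius V := by
  obtain ⟨z, r, hr, rfl⟩ := hV
  have := Metric.diam_mono h Metric.isBounded_ball
  unfold discRadius
  linarith

lemma disc_eq_of_subset_radius_eq {U V : Set ℂ} (hU : IsOpenDisc U) (hV : IsOpenDisc V)
    (hsub : U ⊆ V) (hrad : discRadius U = discRadius V) : U = V := by
  obtain ⟨z, r, hr, rfl⟩ := hU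
  obtain ⟨w, s, hs, rfl⟩ := hV
  rw [discRadius_ball z hr.le, discRadius_ball w hs.le] at hrad
  subst hrad
  rw [ball_subset_ball_center_eq hr hsub]

theorem id_allocationMap_and_unique (D : SwissCheese) :
    IsAllocationMap D D id ∧
      (radSum D.𝒟 < ⊤ →
        ∀ f : Set ℂ → Set ℂ, IsAllocationMap D D f → ∀ U ∈ D.tilde, f U = U) := by
  classical
  constructor
  · refine ⟨fun U h => h, fun U _ => subset_rfl, by simp, ?_⟩
    intro E' hE'
    have hset : {U | U ∈ D.𝒟 ∧ id U = E'} = {E'} := by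
      ext V
      simp only [Set.mem_setOf_eq, id_eq, Set.mem_singleton_iff]
      exact ⟨fun h => h.2, fun h => ⟨h ▸ hE', h⟩⟩
    rw [hset]
    exact le_of_eq (tsum_singleton E' (fun V => ENNReal.ofReal (discRadius V))).symm
  · intro hfin f hf
    set F : Set ℂ → ENNReal := fun V => ENNReal.ofReal (discRadius V) with hF
    have hTne : (∑' U : D.𝒟, F ↑U) ≠ ⊤ := hfin.ne
    have hFpos : ∀ U : D.𝒟, 0 < F ↑U :=
      fun U => ENNReal.ofReal_pos.2 (discRadius_pos (D.h𝒟 _ U.2))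
    -- fibers as sums over `D.𝒟`
    have hfiber : ∀ E' : Set ℂ, radSum {U | U ∈ D.𝒟 ∧ f U = E'} =
        ∑' U : D.𝒟, ({V | f V = E'}.indicator F) ↑U := by
      intro E'
      have h1 : {U | U ∈ D.𝒟 ∧ f U = E'} = D.𝒟 ∩ {V | f V = E'} := rfl
      rw [radSum, h1]
      rw [show (∑' (V : ↥(D.𝒟 ∩ {V | f V = E'})), ENNReal.ofReal (discRadius ↑V))
          = ∑' (V : ↥(D.𝒟 ∩ {V | f V = E'})), F ↑V from rfl]
      rw [tsum_subtype (D.𝒟 ∩ {V | f V = E'}) F, ← Set.indicator_indicator,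
        ← tsum_subtype D.𝒟 ({V | f V = E'}.indicator F)]
    have hinner : ∀ U : D.𝒟,
        (∑' E' : D.𝒟, ({V | f V = (E' : Set ℂ)}.indicator F) ↑U)
          = if f ↑U ∈ D.𝒟 then F ↑U else 0 := by
      intro U
      by_cases h : f ↑U ∈ D.𝒟
      · rw [if_pos h, tsum_eq_single (⟨f ↑U, h⟩ : D.𝒟)]
        · exact Set.indicator_of_mem
            (show (↑U : Set ℂ) ∈ {V | f V = ((⟨f ↑U, h⟩ : D.𝒟) : Set ℂ)} from rfl) F
        · intro E' hne
          refine Set.indicator_of_notMem (fun hmem => hne ?_) F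
          have hmem' : f ↑U = ↑E' := hmem
          exact Subtype.ext hmem'.symm
      · rw [if_neg h]
        have : ∀ E' : D.𝒟, ({V | f V = (E' : Set ℂ)}.indicator F) ↑U = 0 := by
          intro E'
          refine Set.indicator_of_notMem (fun hmem => h ?_) F
          rw [show f ↑U = (E' : Set ℂ) from hmem]
          exact E'.2
        simp only [this, tsum_zero]
    have hswap : (∑' E' : D.𝒟, ∑' U : D.𝒟, ({V | f V = (E' : Set ℂ)}.indicator F) ↑U)
        = ∑' U : D.𝒟, ∑' E' : D.𝒟, ({V | f V = (E' : Set ℂ)}.indicator F) ↑U :=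
      ENNReal.tsum_comm
    have hif_le : ∀ U : D.𝒟, (if f ↑U ∈ D.𝒟 then F ↑U else 0) ≤ F ↑U := by
      intro U; split_ifs; exacts [le_rfl, zero_le]
    have key2 : (∑' E' : D.𝒟, ∑' U : D.𝒟, ({V | f V = (E' : Set ℂ)}.indicator F) ↑U)
        ≤ ∑' U : D.𝒟, F ↑U := by
      rw [hswap, tsum_congr hinner]
      exact ENNReal.tsum_le_tsum hif_le
    have ha3 : ∀ E' : D.𝒟, F ↑E' ≤ ∑' U : D.𝒟, ({V | f V = (E' : Set ℂ)}.indicator F) ↑U :=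
      fun E' => (hfiber ↑E') ▸ hf.a3 ↑E' E'.2
    -- every disc is mapped to a disc
    have hin : ∀ U : D.𝒟, f ↑U ∈ D.𝒟 := by
      intro U
      by_contra h
      have hlt : (∑' U : D.𝒟, if f ↑U ∈ D.𝒟 then F ↑U else 0) < ∑' U : D.𝒟, F ↑U := by
        refine ENNReal.tsum_lt_tsum (i := U)
          (ne_top_of_le_ne_top hTne (ENNReal.tsum_le_tsum hif_le)) hif_le ?_
        rw [if_neg h]
        exact hFpos U
      have hge : (∑' U : D.𝒟, F ↑U) ≤ ∑' U : D.𝒟, if f ↑U ∈ D.𝒟 then F ↑U else 0 := by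
        calc (∑' U : D.𝒟, F ↑U)
            ≤ ∑' E' : D.𝒟, ∑' U : D.𝒟, ({V | f V = (E' : Set ℂ)}.indicator F) ↑U :=
              ENNReal.tsum_le_tsum ha3
          _ = _ := by rw [hswap, tsum_congr hinner]
      exact absurd (hge.trans_lt hlt) (lt_irrefl _)
    -- each fiber sum equals the radius of its target
    have hfibeq : ∀ E' : D.𝒟,
        (∑' U : D.𝒟, ({V | f V = (E' : Set ℂ)}.indicator F) ↑U) = F ↑E' := by
      intro E'
      by_contra hne
      have hstrict : (∑' E'' : D.𝒟, F ↑E'')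
          < ∑' E'' : D.𝒟, ∑' U : D.𝒟, ({V | f V = (E'' : Set ℂ)}.indicator F) ↑U :=
        ENNReal.tsum_lt_tsum (i := E') hTne ha3 ((ha3 E').lt_of_ne (fun h => hne h.symm))
      exact absurd (hstrict.trans_le key2) (lt_irrefl _)
    -- main claim on discs
    have hmain : ∀ U : D.𝒟, f ↑U = ↑U := by
      by_contra hA
      push_neg at hA
      obtain ⟨V, hV⟩ := hA
      set A : Set D.𝒟 := {U | f ↑U ≠ ↑U} with hAdef
      have hVA : V ∈ A := hV
      have hfin2 : {U : D.𝒟 | F ↑V ≤ F ↑U}.Finite :=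
        ENNReal.finite_const_le_of_tsum_ne_top hTne (hFpos V).ne'
      have hSfin : (A ∩ {U : D.𝒟 | F ↑V ≤ F ↑U}).Finite := hfin2.inter_of_right A
      obtain ⟨U₀, hU₀S, hU₀max⟩ :=
        Set.exists_max_image _ (fun U : D.𝒟 => F ↑U) hSfin ⟨V, hVA, le_refl (F ↑V)⟩
      have hmax : ∀ U ∈ A, F ↑U ≤ F ↑U₀ := by
        intro U hU
        by_cases h : F ↑V ≤ F ↑U
        · exact hU₀max U ⟨hU, h⟩
        · exact (not_le.1 h).le.trans hU₀S.2
      have hU₀A : f ↑U₀ ≠ ↑U₀ := hU₀S.1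
      have hE'mem : f ↑U₀ ∈ D.𝒟 := hin U₀
      set e' : D.𝒟 := ⟨f ↑U₀, hE'mem⟩ with he'
      have hsub : (↑U₀ : Set ℂ) ⊆ f ↑U₀ := hf.a1 ↑U₀ (Set.mem_union_left _ U₀.2)
      have hrle : discRadius ↑U₀ ≤ discRadius (f ↑U₀) := discRadius_mono (D.h𝒟 _ hE'mem) hsub
      have hrlt : discRadius (↑U₀ : Set ℂ) < discRadius (f ↑U₀) :=
        hrle.lt_of_ne (fun h => hU₀A
          (disc_eq_of_subset_radius_eq (D.h𝒟 _ U₀.2) (D.h𝒟 _ hE'mem) hsub h).symm)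
      have hFlt : F ↑U₀ < F ↑e' :=
        (ENNReal.ofReal_lt_ofReal_iff (discRadius_pos (D.h𝒟 _ hE'mem))).2 hrlt
      by_cases hcase : f ↑e' = ↑e'
      · have hne : U₀ ≠ e' := fun h => hU₀A (congrArg Subtype.val h).symm
        have hpair : F ↑U₀ + F ↑e'
            ≤ ∑' U : D.𝒟, ({V' | f V' = (e' : Set ℂ)}.indicator F) ↑U := by
          have hs := ENNReal.sum_le_tsum
            (f := fun U : D.𝒟 => ({V' | f V' = (e' : Set ℂ)}.indicator F) ↑U) {U₀, e'}
          rwa [Finset.sum_pair hne,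
            Set.indicator_of_mem (show (↑U₀ : Set ℂ) ∈ {V' | f V' = (e' : Set ℂ)} from rfl) F,
            Set.indicator_of_mem (show (↑e' : Set ℂ) ∈ {V' | f V' = (e' : Set ℂ)} from hcase) F]
            at hs
        rw [hfibeq e'] at hpair
        have hcontr : F ↑e' < F ↑U₀ + F ↑e' := by
          conv_lhs => rw [← zero_add (F ↑e')]
          exact ENNReal.add_lt_add_right (ENNReal.ofReal_ne_top) (hFpos U₀)
        exact absurd (hcontr.trans_le hpair) (lt_irrefl _)
      · exact absurd hFlt (not_lt.2 (hmax e' hcase))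
    -- conclude
    intro U hU
    rcases hU with hU | hU
    · exact hmain ⟨U, hU⟩
    · rw [Set.mem_singleton_iff] at hU
      subst hU
      have hmem : D.Δᶜ ∈ D.tilde := Set.mem_union_right _ rfl
      have hft := hf.maps_to _ hmem
      rcases hft with h | h
      · exfalso
        obtain ⟨z, r, hr, hball⟩ := D.h𝒟 _ h
        obtain ⟨c, R, hR, hΔ⟩ := D.hΔ
        have hsub := hf.a1 _ hmem
        have huniv : (Set.univ : Set ℂ) ⊆ Metric.closedBall c R ∪ Metric.ball z r := by
          intro x _
          by_cases hx : x ∈ D.Δ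
          · exact Or.inl (hΔ ▸ hx)
          · exact Or.inr (hball ▸ hsub hx)
        exact NormedSpace.unbounded_univ ℝ ℂ
          ((Metric.isBounded_closedBall.union Metric.isBounded_ball).subset huniv)
      · exact h
end

section
/- If the Swiss cheese E is above the Swiss cheese D, then δ(E) ≥ δ(D), where δ(Δ, 𝒟) = r(Δ) − Σ_{D∈𝒟} r(D). -/
theorem above_delta_ge (D E : SwissCheese) (f : Set ℂ → Set ℂ)
    (hf : IsAllocationMap D E f) : D.delta ≤ E.delta := by
  classical
  set a := discRadius D.Δ with ha
  set c := discRadius E.Δ with hc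
  set b := radSum D.𝒟 with hb
  set d := radSum E.𝒟 with hd
  set h : Set ℂ → ENNReal := fun U => ENNReal.ofReal (discRadius U) with hh
  set A : Set (Set ℂ) := {U | U ∈ D.𝒟 ∧ f U = E.Δᶜ} with hA
  set B : Set ℂ → Set (Set ℂ) := fun E' => {U | U ∈ D.𝒟 ∧ f U = E'} with hB
  -- main splitting inequality
  have key : radSum A + ∑' (E' : E.𝒟), radSum (B E') ≤ b := by
    have hswap : ∑' (E' : E.𝒟), radSum (B E')
        = ∑' (U : Set ℂ), ∑' (E' : E.𝒟), (B E').indicator h U := by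
      rw [← ENNReal.tsum_comm]
      exact tsum_congr fun E' => tsum_subtype (B E'.1) h
    rw [hswap, radSum, tsum_subtype A h, ← ENNReal.tsum_add, hb, radSum,
      tsum_subtype D.𝒟 h]
    refine ENNReal.tsum_le_tsum fun U => ?_
    by_cases hU : U ∈ D.𝒟
    · have hfU : f U ∈ E.tilde := hf.maps_to U (Or.inl hU)
      rw [Set.indicator_of_mem hU]
      by_cases hcase : f U = E.Δᶜ
      · have hAU : U ∈ A := ⟨hU, hcase⟩
        rw [Set.indicator_of_mem hAU]
        have : ∑' (E' : E.𝒟), (B E').indicator h U = 0 := by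
          refine Summable.tsum_eq_zero_iff ENNReal.summable |>.2 fun E' => ?_
          refine Set.indicator_of_notMem ?_ h
          intro hB'
          exact compl_not_mem E (hcase ▸ hB'.2 ▸ E'.2)
        rw [this, add_zero]
      · have hfU' : f U ∈ E.𝒟 := by
          rcases hfU with h1 | h1
          · exact h1
          · exact absurd h1 hcase
        rw [Set.indicator_of_notMem (fun hAU => hcase hAU.2)]
        rw [zero_add]
        have : ∑' (E' : E.𝒟), (B E').indicator h U = h U := by
          rw [tsum_eq_single (⟨f U, hfU'⟩ : E.𝒟)]
          · exact Set.indicator_of_mem (show U ∈ B (f U) from ⟨hU, rfl⟩) h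
          · intro E' hne
            refine Set.indicator_of_notMem ?_ h
            intro hB'
            exact hne (Subtype.ext hB'.2.symm)
        rw [this]
    · rw [Set.indicator_of_notMem hU,
        Set.indicator_of_notMem (fun hAU => hU hAU.1)]
      have : ∑' (E' : E.𝒟), (B E').indicator h U = 0 := by
        refine Summable.tsum_eq_zero_iff ENNReal.summable |>.2 fun E' => ?_
        exact Set.indicator_of_notMem (fun hB' => hU hB'.1) h
      rw [this, zero_add]
  have hd_le : ENNReal.ofReal (a - c) + d ≤ b := by
    refine le_trans (add_le_add hf.a2 ?_) key
    rw [hd, radSum]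
    exact ENNReal.tsum_le_tsum fun E' => hf.a3 E'.1 E'.2
  -- now the EReal computation
  rw [SwissCheese.delta, SwissCheese.delta, ← ha, ← hc, ← hb, ← hd]
  by_cases hbtop : b = ⊤
  · rw [hbtop, EReal.coe_ennreal_top, EReal.sub_top]
    exact bot_le
  · have hdtop : d ≠ ⊤ := by
      intro hdt
      rw [hdt, add_top] at hd_le
      exact hbtop (top_le_iff.1 hd_le)
    have hbr : ((b.toReal : ℝ) : EReal) = (b : EReal) := by
      rw [← EReal.toReal_coe_ennreal (x := b)]
      exact EReal.coe_toReal (by simpa using hbtop) (by simp)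
    have hdr : ((d.toReal : ℝ) : EReal) = (d : EReal) := by
      rw [← EReal.toReal_coe_ennreal (x := d)]
      exact EReal.coe_toReal (by simpa using hdtop) (by simp)
    rw [← hbr, ← hdr, ← EReal.coe_sub, ← EReal.coe_sub, EReal.coe_le_coe_iff]
    -- real inequality: a - b.toReal ≤ c - d.toReal
    have h1 : (ENNReal.ofReal (a - c)).toReal + d.toReal ≤ b.toReal := by
      rw [← ENNReal.toReal_add ENNReal.ofReal_ne_top hdtop]
      exact ENNReal.toReal_mono hbtop hd_le
    have h2 : a - c ≤ (ENNReal.ofReal (a - c)).toReal := by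
      by_cases hac : 0 ≤ a - c
      · rw [ENNReal.toReal_ofReal hac]
      · have := ENNReal.toReal_nonneg (a := ENNReal.ofReal (a - c))
        linarith
    linarith
end

section
/- Let H be a closed disc and E an open disc in ℂ such that the closure of E is not contained in the interior of H, and the interior of H is not contained in the closure of E. Then there exists a closed disc H' ⊆ H with E ∩ H' = ∅ and r(H') ≥ r(H) − r(E). -/
theorem exists_subdisc_avoiding_disc (zH w : ℂ) (R s : ℝ) (hR : 0 < R) (hs : 0 < s)
    (h1 : ¬ closure (Metric.ball w s) ⊆ interior (Metric.closedBall zH R))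
    (h2 : ¬ interior (Metric.closedBall zH R) ⊆ closure (Metric.ball w s)) :
    ∃ z' : ℂ, ∃ r' : ℝ, 0 < r' ∧ R - s ≤ r' ∧
      Metric.closedBall z' r' ⊆ Metric.closedBall zH R ∧
      Metric.ball w s ∩ Metric.closedBall z' r' = ∅ := by
  rw [closure_ball w hs.ne', interior_closedBall zH hR.ne'] at h1 h2
  set d := dist zH w with hd
  obtain ⟨x, hx1, hx2⟩ := Set.not_subset.mp h1
  obtain ⟨y, hy1, hy2⟩ := Set.not_subset.mp h2
  rw [Metric.mem_closedBall] at hx1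
  rw [Metric.mem_ball, not_lt] at hx2
  rw [Metric.mem_ball] at hy1
  rw [Metric.mem_closedBall, not_le] at hy2
  have hdge : R - s ≤ d := by
    have h3 : dist x zH ≤ s + d := by
      calc dist x zH ≤ dist x w + dist w zH := dist_triangle _ _ _
        _ ≤ s + d := by rw [dist_comm w zH]; linarith
    linarith
  have hpos : 0 < d + R - s := by
    have : dist y w ≤ dist y zH + d := dist_triangle _ _ _
    linarith
  have hd0 : 0 < d := by
    rcases lt_or_ge 0 d with h | h
    · exact h
    · have : d = 0 := le_antisymm h dist_nonneg
      nlinarith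
  set r' := min R ((d + R - s) / 2) with hr'
  have hr'pos : 0 < r' := lt_min hR (by linarith)
  have hr'le : r' ≤ R := min_le_left _ _
  have hr'le2 : r' ≤ (d + R - s) / 2 := min_le_right _ _
  have hr'ge : R - s ≤ r' := le_min (by linarith) (by linarith)
  set u : ℂ := (zH - w) / d with hu
  set z' : ℂ := zH + (R - r') * u with hz'
  have habs : ‖zH - w‖ = d := by rw [hd, Complex.dist_eq]
  have hu1 : ‖u‖ = 1 := by
    rw [hu, norm_div, habs]
    simp [Complex.norm_real, Real.norm_eq_abs, abs_of_pos hd0, div_self hd0.ne']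
  have hdistz' : dist z' zH = R - r' := by
    rw [hz', Complex.dist_eq]
    have he : zH + (R - r') * u - zH = ((R - r' : ℝ) : ℂ) * u := by push_cast; ring
    rw [he, norm_mul, hu1, mul_one, Complex.norm_real, Real.norm_eq_abs, abs_of_nonneg (by linarith)]
  have hdistw : dist z' w = d + (R - r') := by
    rw [hz', Complex.dist_eq]
    have h2 : zH - w = (d : ℂ) * u := by
      have hdc : (d : ℂ) ≠ 0 := Complex.ofReal_ne_zero.mpr hd0.ne'
      rw [hu, mul_div_cancel₀ _ hdc]
    have he : zH + (R - r') * u - w = ((d + (R - r') : ℝ) : ℂ) * u := by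
      rw [show zH + (↑R - ↑r') * u - w = (zH - w) + (↑R - ↑r') * u by ring, h2]
      push_cast; ring
    rw [he, norm_mul, hu1, mul_one, Complex.norm_real, Real.norm_eq_abs, abs_of_nonneg (by linarith)]
  refine ⟨z', r', hr'pos, hr'ge, ?_, ?_⟩
  · exact Metric.closedBall_subset_closedBall' (by rw [hdistz']; linarith)
  · ext p
    simp only [Set.mem_inter_iff, Metric.mem_ball, Metric.mem_closedBall,
      Set.mem_empty_iff_false, iff_false, not_and, not_le]
    intro hp
    by_contra h
    push_neg at h
    have ht : dist z' w ≤ dist z' p + dist p w := dist_triangle _ _ _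
    rw [dist_comm z' p, hdistw] at ht
    linarith
end

section
/- Let X be a semiclassical Swiss cheese set with associated semiclassical Swiss cheese (Δ, 𝒟), and let μ be the measure μ_{γ_Δ} + Σ_{D'∈𝒟} μ_{γ_{D'}} formed from the positively oriented boundary circle of Δ and negatively oriented boundary circles of the removed discs. Then ∫ f dμ = 0 for every rational function f with no poles on X. -/
open Metric Polynomial Complex Real


lemma CircleIntegrable.finsetSum {ι : Type*} (s : Finset ι) (f : ι → ℂ → ℂ) {c : ℂ} {R : ℝ}
    (h : ∀ i ∈ s, CircleIntegrable (f i) c R) :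
    CircleIntegrable (fun z => ∑ i ∈ s, f i z) c R := by
  classical
  induction s using Finset.induction_on with
  | empty => simpa using circleIntegrable_const 0 c R
  | insert _ _ hni ih =>
    rename_i a s
    simp only [Finset.sum_insert hni]
    exact (h a (Finset.mem_insert_self a s)).add (ih fun i hi => h i (Finset.mem_insert_of_mem hi))

lemma circleIntegral_add' {f g : ℂ → ℂ} {c : ℂ} {R : ℝ} (hf : CircleIntegrable f c R)
    (hg : CircleIntegrable g c R) :
    (∮ z in C(c, R), f z + g z) = (∮ z in C(c, R), f z) + ∮ z in C(c, R), g z := by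
  simp only [circleIntegral, smul_add, intervalIntegral.integral_add hf.out hg.out]

lemma circleIntegral_finsetSum {ι : Type*} (s : Finset ι) (f : ι → ℂ → ℂ) {c : ℂ} {R : ℝ}
    (h : ∀ i ∈ s, CircleIntegrable (f i) c R) :
    (∮ z in C(c, R), ∑ i ∈ s, f i z) = ∑ i ∈ s, ∮ z in C(c, R), f i z := by
  classical
  induction s using Finset.induction_on with
  | empty => simp [circleIntegral]
  | insert _ _ hni ih =>
    rename_i a s
    simp only [Finset.sum_insert hni]
    rw [circleIntegral_add' (h a (Finset.mem_insert_self a s))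
      (CircleIntegrable.finsetSum s f fun i hi => h i (Finset.mem_insert_of_mem hi)),
      ih fun i hi => h i (Finset.mem_insert_of_mem hi)]

open scoped Classical in
lemma circleInt_poly_div_pow (b : Polynomial ℂ) (r w0 : ℂ) (ρ : ℝ) (hρ : 0 < ρ) (m : ℕ)
    (hm : 0 < m) (hr : r ∉ sphere w0 ρ) :
    (∮ z in C(w0, ρ), b.eval z / (z - r) ^ m) =
      if r ∈ ball w0 ρ then (2 * π * I) * ((Polynomial.taylor r b).coeff (m - 1)) else 0 := by
  split_ifs with hin
  · set n := (Polynomial.taylor r b).natDegree + 1 with hn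
    have key : Set.EqOn (fun z => b.eval z / (z - r) ^ m)
        (fun z => ∑ k ∈ Finset.range n, (Polynomial.taylor r b).coeff k * (z - r) ^ ((k : ℤ) - m))
        (sphere w0 ρ) := by
      intro z hz
      have hzr : z ≠ r := by
        rintro rfl
        rw [mem_sphere] at hz
        rw [mem_ball] at hin
        exact absurd hz (ne_of_lt hin)
      have hb : b.eval z = ∑ k ∈ Finset.range n, (Polynomial.taylor r b).coeff k * (z - r) ^ k := by
        conv_lhs => rw [← Polynomial.taylor_eval_sub r b z]
        rw [Polynomial.eval_eq_sum_range]
      simp only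
      rw [hb, Finset.sum_div]
      refine Finset.sum_congr rfl fun k _ => ?_
      rw [mul_div_assoc]
      congr 1
      rw [← zpow_natCast (z - r) k, ← zpow_natCast (z - r) m, ← zpow_sub₀ (sub_ne_zero.2 hzr)]
    rw [circleIntegral.integral_congr hρ.le key]
    have hint : ∀ k ∈ Finset.range n, CircleIntegrable
        (fun z => (Polynomial.taylor r b).coeff k * (z - r) ^ ((k : ℤ) - m)) w0 ρ := by
      intro k _
      have : CircleIntegrable (fun z => (z - r) ^ ((k : ℤ) - m)) w0 ρ := by
        refine circleIntegrable_sub_zpow_iff.2 (Or.inr (Or.inr ?_))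
        rwa [abs_of_pos hρ]
      exact IntervalIntegrable.const_mul this ((Polynomial.taylor r b).coeff k)
    rw [circleIntegral_finsetSum _ _ hint]
    have heval : ∀ k : ℕ, (∮ z in C(w0, ρ), (Polynomial.taylor r b).coeff k * (z - r) ^ ((k : ℤ) - m))
        = (Polynomial.taylor r b).coeff k * ∮ z in C(w0, ρ), (z - r) ^ ((k : ℤ) - m) :=
      fun k => circleIntegral.integral_const_mul _ _ _ _
    rw [Finset.sum_congr rfl fun k _ => heval k, Finset.sum_eq_single (m - 1)]
    · have h1 : ((m - 1 : ℕ) : ℤ) - m = -1 := by omega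
      rw [h1]
      have h2 : (∮ z in C(w0, ρ), (z - r) ^ (-1 : ℤ)) = 2 * π * I := by
        simp only [zpow_neg_one]
        exact circleIntegral.integral_sub_inv_of_mem_ball hin
      rw [h2]; ring
    · intro k _ hne
      rw [circleIntegral.integral_sub_zpow_of_ne (by omega), mul_zero]
    · intro hnm
      have : (Polynomial.taylor r b).natDegree < m - 1 := by
        simp only [Finset.mem_range, hn] at hnm; omega
      rw [Polynomial.coeff_eq_zero_of_natDegree_lt this, zero_mul]
  · have hout : r ∉ closedBall w0 ρ := by
      intro hcb
      rcases lt_or_eq_of_le (mem_closedBall.1 hcb) with h | h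
      · exact hin (mem_ball.2 h)
      · exact hr (mem_sphere.2 h)
    refine Complex.circleIntegral_eq_zero_of_differentiable_on_off_countable hρ.le
      Set.countable_empty ?_ ?_
    · intro z hz
      have hzr : z - r ≠ 0 := sub_ne_zero.2 fun h => hout (h ▸ hz)
      exact ((b.differentiable.differentiableAt.div
        (((differentiable_id.sub_const r).pow m).differentiableAt)
        (pow_ne_zero m hzr)).continuousAt).continuousWithinAt
    · intro z hz
      have hzr : z - r ≠ 0 := sub_ne_zero.2 fun h => hout (h ▸ ball_subset_closedBall hz.1)
      exact (b.differentiable.differentiableAt.div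
        (((differentiable_id.sub_const r).pow m).differentiableAt) (pow_ne_zero m hzr))

open scoped Classical in
lemma circleInt_decomp (t : Finset ℂ) (m : ℂ → ℕ) (hm : ∀ r ∈ t, 0 < m r)
    (a : Polynomial ℂ) (b : ℂ → Polynomial ℂ) (q₂ : Polynomial ℂ) (w0 : ℂ) (ρ : ℝ) (hρ : 0 < ρ)
    (hq₂ : ∀ z ∈ closedBall w0 ρ, q₂.eval z ≠ 0) (hsph : ∀ r ∈ t, r ∉ sphere w0 ρ) :
    (∮ z in C(w0, ρ), (a.eval z / q₂.eval z + ∑ r ∈ t, (b r).eval z / (z - r) ^ (m r)))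
      = ∑ r ∈ t.filter (· ∈ ball w0 ρ), (2 * π * I) * ((Polynomial.taylor r (b r)).coeff (m r - 1)) := by
  have int1 : CircleIntegrable (fun z => a.eval z / q₂.eval z) w0 ρ := by
    refine ContinuousOn.circleIntegrable hρ.le ?_
    exact (a.continuous_aeval.continuousOn).div (q₂.continuous_aeval.continuousOn)
      fun z hz => hq₂ z (sphere_subset_closedBall hz)
  have int2 : ∀ r ∈ t, CircleIntegrable (fun z => (b r).eval z / (z - r) ^ (m r)) w0 ρ := by
    intro r hr
    refine ContinuousOn.circleIntegrable hρ.le ?_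
    refine ((b r).continuous_aeval.continuousOn).div
      (((continuous_id.sub continuous_const).pow (m r)).continuousOn) fun z hz => ?_
    exact pow_ne_zero _ (sub_ne_zero.2 fun h => hsph r hr (h ▸ hz))
  rw [circleIntegral_add' int1 (CircleIntegrable.finsetSum t _ int2),
    circleIntegral_finsetSum t _ int2]
  have h0 : (∮ z in C(w0, ρ), a.eval z / q₂.eval z) = 0 := by
    refine Complex.circleIntegral_eq_zero_of_differentiable_on_off_countable hρ.le
      Set.countable_empty ?_ ?_
    · exact (a.continuous_aeval.continuousOn).div (q₂.continuous_aeval.continuousOn) hq₂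
    · intro z hz
      exact a.differentiable.differentiableAt.div q₂.differentiable.differentiableAt
        (hq₂ z (ball_subset_closedBall hz.1))
  rw [h0, zero_add, Finset.sum_congr rfl
    fun r hr => circleInt_poly_div_pow (b r) r w0 ρ hρ (m r) (hm r hr) (hsph r hr)]
  rw [Finset.sum_filter]

lemma partial_fractions (t : Finset ℂ) (m : ℂ → ℕ) (q₂ : Polynomial ℂ)
    (hq₂ : ∀ r ∈ t, q₂.eval r ≠ 0) (p : Polynomial ℂ) :
    ∃ (a : Polynomial ℂ) (b : ℂ → Polynomial ℂ), ∀ z : ℂ, q₂.eval z ≠ 0 → (∀ r ∈ t, z ≠ r) →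
      p.eval z / ((∏ r ∈ t, (z - r) ^ (m r)) * q₂.eval z)
        = a.eval z / q₂.eval z + ∑ r ∈ t, (b r).eval z / (z - r) ^ (m r) := by
  classical
  induction t using Finset.induction_on generalizing p with
  | empty => exact ⟨p, fun _ => 0, fun z hz _ => by simp⟩
  | insert _ _ hni ih =>
    rename_i r₀ t'
    -- coprimality
    have hcop : IsCoprime ((X - C r₀) ^ (m r₀)) ((∏ r ∈ t', (X - C r) ^ (m r)) * q₂) := by
      have h1 : IsCoprime (X - C r₀) q₂ := by
        rw [(Polynomial.irreducible_X_sub_C r₀).coprime_iff_not_dvd, Polynomial.dvd_iff_isRoot]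
        exact hq₂ r₀ (Finset.mem_insert_self _ _)
      have h2 : ∀ r ∈ t', IsCoprime (X - C r₀) ((X - C r) ^ (m r)) := by
        intro r hr
        exact (Polynomial.isCoprime_X_sub_C_of_isUnit_sub
          (sub_ne_zero.2 fun h : r₀ = r => hni (h ▸ hr)).isUnit).pow_right
      exact ((IsCoprime.prod_right h2).mul_right h1).pow_left
    obtain ⟨u, v, huv⟩ := hcop
    obtain ⟨a, b', hab⟩ := ih (fun r hr => hq₂ r (Finset.mem_insert_of_mem hr)) (p * u)
    refine ⟨a, Function.update b' r₀ (p * v), fun z hz hzr => ?_⟩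
    have hA : (z - r₀) ^ (m r₀) ≠ 0 :=
      pow_ne_zero _ (sub_ne_zero.2 (hzr r₀ (Finset.mem_insert_self _ _)))
    have hB : (∏ r ∈ t', (z - r) ^ (m r)) ≠ 0 := by
      refine Finset.prod_ne_zero_iff.2 fun r hr => ?_
      exact pow_ne_zero _ (sub_ne_zero.2 (hzr r (Finset.mem_insert_of_mem hr)))
    have huv' : u.eval z * (z - r₀) ^ (m r₀)
        + v.eval z * ((∏ r ∈ t', (z - r) ^ (m r)) * q₂.eval z) = 1 := by
      have := congrArg (Polynomial.eval z) huv
      simpa [Polynomial.eval_prod] using this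
    have key := hab z hz fun r hr => hzr r (Finset.mem_insert_of_mem hr)
    rw [Finset.prod_insert hni, Finset.sum_insert hni]
    have hsum : ∑ r ∈ t', (Function.update b' r₀ (p * v) r).eval z / (z - r) ^ (m r)
        = ∑ r ∈ t', (b' r).eval z / (z - r) ^ (m r) :=
      Finset.sum_congr rfl fun r hr => by
        rw [Function.update_of_ne (fun h : r = r₀ => hni (h ▸ hr)) _ _]
    rw [hsum, Function.update_self]
    have step1 : p.eval z / (((z - r₀) ^ (m r₀) * ∏ x ∈ t', (z - x) ^ (m x)) * q₂.eval z)
        = (p * v).eval z / (z - r₀) ^ (m r₀)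
          + (p * u).eval z / ((∏ r ∈ t', (z - r) ^ (m r)) * q₂.eval z) := by
      have hBC : (∏ r ∈ t', (z - r) ^ (m r)) * q₂.eval z ≠ 0 := mul_ne_zero hB hz
      rw [Polynomial.eval_mul, Polynomial.eval_mul, div_add_div _ _ hA hBC,
        div_eq_div_iff (by rw [mul_assoc]; exact mul_ne_zero hA hBC) (mul_ne_zero hA hBC)]
      linear_combination (-(Polynomial.eval z p)) * ((z - r₀) ^ (m r₀))
        * ((∏ x ∈ t', (z - x) ^ (m x)) * q₂.eval z) * huv'
    rw [step1, key]
    ring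

open Metric

theorem semiclassical_measure_annihilates_rational {ι : Type} [Countable ι]
    (z0 : ℂ) (R : ℝ) (c : ι → ℂ) (ρ : ι → ℝ) (hR : 0 < R) (hρ : ∀ i, 0 < ρ i)
    (hdisj : ∀ i j, i ≠ j → Disjoint (ball (c i) (ρ i)) (ball (c j) (ρ j)))
    (hsub : ∀ i, ball (c i) (ρ i) ⊆ closedBall z0 R)
    (hproper : ∀ i, closedBall (c i) (ρ i) ⊂ closedBall z0 R)
    (hsum : Summable ρ)
    (p q : Polynomial ℂ)
    (hq : ∀ w ∈ closedBall z0 R \ ⋃ i, ball (c i) (ρ i), q.eval w ≠ 0) :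
    Summable (fun i => ∮ w in C(c i, ρ i), p.eval w / q.eval w) ∧
      (∮ w in C(z0, R), p.eval w / q.eval w) =
        ∑' i, ∮ w in C(c i, ρ i), p.eval w / q.eval w := by
  classical
  -- the outer sphere avoids all the removed balls
  have hsphout : ∀ (U : Set ℂ), IsOpen U → U ⊆ closedBall z0 R →
      ∀ w ∈ sphere z0 R, w ∉ U := by
    intro U hU hUsub w hw hwU
    obtain ⟨ε, hε, hballU⟩ := Metric.isOpen_iff.1 hU w hwU
    set w' : ℂ := z0 + ((1 + ε / (2 * R) : ℝ) : ℂ) * (w - z0) with hw'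
    have hwz : ‖w - z0‖ = R := by
      have := mem_sphere.1 hw; rwa [dist_eq_norm] at this
    have hw'w : dist w' w = ε / 2 := by
      rw [dist_eq_norm]
      have h1 : w' - w = ((ε / (2 * R) : ℝ) : ℂ) * (w - z0) := by rw [hw']; push_cast; ring
      rw [h1, norm_mul, Complex.norm_real, hwz, Real.norm_of_nonneg (by positivity)]
      field_simp
    have h1 : w' ∈ U := hballU (by rw [mem_ball, hw'w]; linarith)
    have h2 : dist w' z0 = (1 + ε / (2 * R)) * R := by
      rw [dist_eq_norm]
      have h3 : w' - z0 = ((1 + ε / (2 * R) : ℝ) : ℂ) * (w - z0) := by rw [hw']; ring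
      rw [h3, norm_mul, Complex.norm_real, hwz, Real.norm_of_nonneg (by positivity)]
    have h4 := mem_closedBall.1 (hUsub h1)
    rw [h2] at h4
    have hpos : (0:ℝ) < ε / (2 * R) * R := by positivity
    nlinarith
  have hXs : ∀ w ∈ sphere z0 R, q.eval w ≠ 0 := by
    intro w hw
    refine hq w ⟨sphere_subset_closedBall hw, ?_⟩
    simp only [Set.mem_iUnion, not_exists]
    exact fun i => hsphout _ isOpen_ball (hsub i) w hw
  have hcbi : ∀ i, closedBall (c i) (ρ i) ⊆ closedBall z0 R := fun i => (hproper i).subset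
  have hXi : ∀ i, ∀ w ∈ sphere (c i) (ρ i), q.eval w ≠ 0 := by
    intro i w hw
    refine hq w ⟨hcbi i (sphere_subset_closedBall hw), ?_⟩
    simp only [Set.mem_iUnion, not_exists]
    intro j hwj
    by_cases hij : j = i
    · subst hij
      exact absurd (mem_sphere.1 hw) (ne_of_lt (mem_ball.1 hwj))
    · have hwc : w ∈ closure (ball (c i) (ρ i)) := by
        rw [closure_ball _ (hρ i).ne']; exact sphere_subset_closedBall hw
      obtain ⟨y, hy1, hy2⟩ := (_root_.mem_closure_iff.1 hwc) _ isOpen_ball hwj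
      exact (hdisj j i hij).le_bot ⟨hy1, hy2⟩
  have hq0 : q ≠ 0 := by
    intro h
    have hmem : (z0 + (R : ℂ)) ∈ sphere z0 R := by
      simp [Complex.dist_eq, abs_of_pos hR]
    exact hXs _ hmem (by simp [h])
  set t : Finset ℂ := q.roots.toFinset.filter (· ∈ closedBall z0 R) with ht
  have htmem : ∀ r, r ∈ t ↔ q.eval r = 0 ∧ r ∈ closedBall z0 R := by
    intro r
    rw [ht, Finset.mem_filter, Multiset.mem_toFinset, Polynomial.mem_roots hq0]
    exact Iff.rfl
  set m : ℂ → ℕ := fun r => q.rootMultiplicity r with hmdef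
  have hdvd : (∏ r ∈ t, (Polynomial.X - Polynomial.C r) ^ (m r)) ∣ q := by
    refine Finset.prod_dvd_of_coprime ?_ fun r _ => q.pow_rootMultiplicity_dvd r
    intro r _ r' _ hne
    exact (Polynomial.isCoprime_X_sub_C_of_isUnit_sub (sub_ne_zero.2 hne).isUnit).pow
  obtain ⟨q₂, hq₂eq⟩ := hdvd
  have hq₂ne : ∀ w ∈ closedBall z0 R, q₂.eval w ≠ 0 := by
    intro w hw hval
    have hwt : w ∈ t := (htmem w).2 ⟨by rw [hq₂eq]; simp [hval], hw⟩
    have h1 : (Polynomial.X - Polynomial.C w) ^ (m w) ∣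
        (∏ r ∈ t, (Polynomial.X - Polynomial.C r) ^ (m r)) := Finset.dvd_prod_of_mem _ hwt
    have h2 : (Polynomial.X - Polynomial.C w) ∣ q₂ := Polynomial.dvd_iff_isRoot.2 hval
    have h3 : (Polynomial.X - Polynomial.C w) ^ (m w + 1) ∣ q := by
      rw [hq₂eq, pow_succ]; exact mul_dvd_mul h1 h2
    exact Polynomial.pow_rootMultiplicity_not_dvd hq0 w h3
  have hqeval : ∀ z : ℂ, q.eval z = (∏ r ∈ t, (z - r) ^ (m r)) * q₂.eval z := by
    intro z
    conv_lhs => rw [hq₂eq]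
    simp [Polynomial.eval_prod]
  have hm : ∀ r ∈ t, 0 < m r := fun r hr =>
    (Polynomial.rootMultiplicity_pos hq0).2 ((htmem r).1 hr).1
  have hball : ∀ r ∈ t, ∃ i, r ∈ ball (c i) (ρ i) := by
    intro r hr
    by_contra h
    push_neg at h
    exact hq r ⟨((htmem r).1 hr).2, by simpa using h⟩ ((htmem r).1 hr).1
  obtain ⟨a, b, hab⟩ := partial_fractions t m q₂ (fun r hr => hq₂ne r ((htmem r).1 hr).2) p
  set V : ℂ → ℂ := fun r =>
    (2 * Real.pi * Complex.I) * ((Polynomial.taylor r (b r)).coeff (m r - 1)) with hV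
  have hcirc : ∀ (w0 : ℂ) (ρ' : ℝ), 0 < ρ' → closedBall w0 ρ' ⊆ closedBall z0 R →
      (∀ w ∈ sphere w0 ρ', q.eval w ≠ 0) →
      (∮ z in C(w0, ρ'), p.eval z / q.eval z) = ∑ r ∈ t.filter (· ∈ ball w0 ρ'), V r := by
    intro w0 ρ' hρ' hsub' hsph'
    have hcongr : Set.EqOn (fun z => p.eval z / q.eval z)
        (fun z => a.eval z / q₂.eval z + ∑ r ∈ t, (b r).eval z / (z - r) ^ (m r))
        (sphere w0 ρ') := by
      intro z hz
      have hqz : q.eval z ≠ 0 := hsph' z hz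
      have hq₂z : q₂.eval z ≠ 0 := hq₂ne z (hsub' (sphere_subset_closedBall hz))
      have hzr : ∀ r ∈ t, z ≠ r := fun r hr he => hqz (he ▸ ((htmem r).1 hr).1)
      simp only
      rw [← hab z hq₂z hzr, ← hqeval z]
    rw [circleIntegral.integral_congr hρ'.le hcongr]
    exact circleInt_decomp t m hm a b q₂ w0 ρ' hρ' (fun z hz => hq₂ne z (hsub' hz))
      (fun r hr hs => hsph' r hs ((htmem r).1 hr).1)
  have hbig : (∮ w in C(z0, R), p.eval w / q.eval w) = ∑ r ∈ t, V r := by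
    rw [hcirc z0 R hR subset_rfl hXs]
    congr 1
    refine Finset.filter_true_of_mem fun r hr => ?_
    rcases lt_or_eq_of_le (mem_closedBall.1 ((htmem r).1 hr).2) with h | h
    · exact mem_ball.2 h
    · exact absurd ((htmem r).1 hr).1 (hXs r (mem_sphere.2 h))
  have hsmall : ∀ i, (∮ w in C(c i, ρ i), p.eval w / q.eval w)
      = ∑ r ∈ t.filter (· ∈ ball (c i) (ρ i)), V r :=
    fun i => hcirc (c i) (ρ i) (hρ i) (hcbi i) (hXi i)
  have hselect : ∀ r : {x // x ∈ t}, ∃ i, (r : ℂ) ∈ ball (c i) (ρ i) := fun r => hball r r.2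
  choose idx hidx using hselect
  set T : Finset ι := t.attach.image idx with hT
  have hzero : ∀ i ∉ T, (t.filter (· ∈ ball (c i) (ρ i))) = ∅ := by
    intro i hi
    rw [Finset.filter_eq_empty_iff]
    intro r hr hrb
    have hieq : idx ⟨r, hr⟩ = i := by
      by_contra hne
      exact (hdisj _ _ hne).le_bot ⟨hidx ⟨r, hr⟩, hrb⟩
    exact hi (hieq ▸ Finset.mem_image_of_mem idx (Finset.mem_attach t ⟨r, hr⟩))
  have hFzero : ∀ i ∉ T, (∮ w in C(c i, ρ i), p.eval w / q.eval w) = 0 := by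
    intro i hi
    rw [hsmall i, hzero i hi, Finset.sum_empty]
  constructor
  · exact summable_of_ne_finset_zero hFzero
  · rw [tsum_eq_sum hFzero, hbig, Finset.sum_congr rfl fun i _ => hsmall i,
      ← Finset.sum_biUnion ?_]
    · congr 1
      ext r
      simp only [Finset.mem_biUnion, Finset.mem_filter]
      constructor
      · intro hr
        exact ⟨idx ⟨r, hr⟩, Finset.mem_image_of_mem idx (Finset.mem_attach t ⟨r, hr⟩),
          hr, hidx ⟨r, hr⟩⟩
      · rintro ⟨i, _, hr, _⟩
        exact hr
    · intro i _ j _ hij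
      rw [Function.onFun, Finset.disjoint_left]
      intro r hri hrj
      exact (hdisj i j hij).le_bot ⟨(Finset.mem_filter.1 hri).2, (Finset.mem_filter.1 hrj).2⟩
end
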